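/- For all x, y ∈ E, the averaged squared norm of the semi-stochastic gradient direction satisfies (1/n) Σ_{i=1}^n ‖∇f(x) + ∇f_i(y) − ∇f_i(x)‖² ≤ 4L (f(y) − f(x*)) + 4(L − μ)(f(x) − f(x*)). -/

import Mathlib

open scoped RealInnerProductSpace BigOperators

lemma aux_coco {E : Type*} [NormedAddCommGroup E] [InnerProductSpace ℝ E]
    (φ : E → ℝ) (G : E → E) {L : ℝ} (hL : 0 < L)
    (hconv : ∀ x z : E, φ x + ⟪G x, z - x⟫ ≤ φ z)
    (hsmooth : ∀ x z : E, φ z ≤ φ x + ⟪G x, z - x⟫ + L / 2 * ‖z - x‖ ^ 2)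
    (x z : E) : ‖G z - G x‖ ^ 2 ≤ 2 * L * (φ z - φ x - ⟪G x, z - x⟫) := by
  set g := G z - G x with hg
  set w := z - L⁻¹ • g with hw
  have h1 := hconv x w
  have h2 := hsmooth z w
  have hwz : w - z = -(L⁻¹ • g) := by rw [hw]; abel
  have hnorm : ‖w - z‖ ^ 2 = L⁻¹ ^ 2 * ‖g‖ ^ 2 := by
    rw [hwz, norm_neg, norm_smul, mul_pow]
    simp [abs_of_pos (inv_pos.mpr hL)]
  have hwx : w - x = (z - x) + (w - z) := by abel
  have hi1 : ⟪G x, w - x⟫ = ⟪G x, z - x⟫ - L⁻¹ * ⟪G x, g⟫ := by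
    rw [hwx, inner_add_right, hwz, inner_neg_right, real_inner_smul_right]; ring
  have hi2 : ⟪G z, w - z⟫ = - (L⁻¹ * ⟪G z, g⟫) := by
    rw [hwz, inner_neg_right, real_inner_smul_right]
  have hgg : ⟪G z, g⟫ - ⟪G x, g⟫ = ‖g‖ ^ 2 := by
    rw [← inner_sub_left, ← hg, real_inner_self_eq_norm_sq]
  have hL' : L ≠ 0 := ne_of_gt hL
  rw [hi1] at h1
  rw [hi2, hnorm] at h2
  have key : L⁻¹ * ‖g‖^2 - L/2 * (L⁻¹^2 * ‖g‖^2) ≤ φ z - φ x - ⟪G x, z - x⟫ := by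
    have hgg' : L⁻¹ * ⟪G z, g⟫ - L⁻¹ * ⟪G x, g⟫ = L⁻¹ * ‖g‖^2 := by
      rw [← mul_sub, hgg]
    linarith [h1, h2, hgg']
  have heq : L⁻¹ * ‖g‖^2 - L/2 * (L⁻¹^2 * ‖g‖^2) = ‖g‖^2 / (2*L) := by
    field_simp; ring
  rw [heq] at key
  calc ‖g‖^2 = 2*L*(‖g‖^2/(2*L)) := by field_simp
    _ ≤ 2*L*(φ z - φ x - ⟪G x, z - x⟫) := by
        apply mul_le_mul_of_nonneg_left key; positivity

/-- bound on the averaged squared norm of the semi-stochastic gradient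
direction: `(1/n) ∑ i, ‖∇f x + ∇f_i y − ∇f_i x‖² ≤ 4L (f y − f x*) + 4(L−μ)(f x − f x*)`. -/
theorem s2gd_direction_second_moment_bound
    {E : Type*} [NormedAddCommGroup E] [InnerProductSpace ℝ E] [CompleteSpace E]
    {n : ℕ} (hn : 0 < n) (f : Fin n → E → ℝ) {L μ : ℝ} (hL : 0 < L)
    (hμpos : 0 < μ) (hμL : μ ≤ L)
    (hdiff : ∀ i, Differentiable ℝ (f i))
    (hconv : ∀ i, ∀ x z : E, f i x + ⟪gradient (f i) x, z - x⟫ ≤ f i z)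
    (hsmooth : ∀ i, ∀ x z : E,
      f i z ≤ f i x + ⟪gradient (f i) x, z - x⟫ + L / 2 * ‖z - x‖ ^ 2)
    (favg : E → ℝ) (hfavg : favg = fun x => (1 / (n : ℝ)) * ∑ i, f i x)
    (hstrong : ∀ x z : E,
      favg x + ⟪gradient favg x, z - x⟫ + μ / 2 * ‖z - x‖ ^ 2 ≤ favg z)
    (xstar : E) (hmin : ∀ z : E, favg xstar ≤ favg z)
    (hstar : gradient favg xstar = 0) (x y : E) :
    (1 / (n : ℝ)) *
        ∑ i, ‖gradient favg x + gradient (f i) y - gradient (f i) x‖ ^ 2 ≤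
      4 * L * (favg y - favg xstar) + 4 * (L - μ) * (favg x - favg xstar) := by
  have hn' : (0:ℝ) < n := by exact_mod_cast hn
  have hnne : (n:ℝ) ≠ 0 := ne_of_gt hn'
  have hgradz : ∀ z : E, gradient favg z = (1/(n:ℝ)) • ∑ i, gradient (f i) z := by
    intro z
    have h : HasGradientAt favg ((1/(n:ℝ)) • ∑ i, gradient (f i) z) z := by
      rw [hfavg, hasGradientAt_iff_hasFDerivAt, map_smul, map_sum]
      have hsum : HasFDerivAt (fun w => ∑ i, f i w)
          (∑ i, (InnerProductSpace.toDual ℝ E (gradient (f i) z) : E →L[ℝ] ℝ)) z :=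
        HasFDerivAt.fun_sum (fun i _ => ((hdiff i z).hasGradientAt).hasFDerivAt)
      simpa [Pi.smul_def] using hsum.const_smul (1/(n:ℝ))
    exact h.gradient
  set g := gradient favg x with hgdef
  have hsum0 : ∑ i, gradient (f i) xstar = 0 := by
    have h0 : (1/(n:ℝ)) • ∑ i, gradient (f i) xstar = 0 := by
      rw [← hgradz xstar, hstar]
    rcases smul_eq_zero.mp h0 with h | h
    · exact absurd h (by positivity)
    · exact h
  have hsumx : ∑ i, gradient (f i) x = (n:ℝ) • g := by
    rw [hgdef, hgradz x, smul_smul, mul_one_div, div_self hnne, one_smul]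
  have coco : ∀ i, ∀ z : E, ‖gradient (f i) z - gradient (f i) xstar‖^2 ≤
      2*L*(f i z - f i xstar - ⟪gradient (f i) xstar, z - xstar⟫) :=
    fun i z => aux_coco (f i) (gradient (f i)) hL (hconv i) (hsmooth i) xstar z
  have hfsum : ∀ z : E, ∑ i, f i z = (n:ℝ) * favg z := by
    intro z; rw [hfavg]; field_simp
  have hinner0 : ∀ v : E, ∑ i, ⟪gradient (f i) xstar, v⟫ = 0 := by
    intro v; rw [← sum_inner, hsum0, inner_zero_left]
  have hB : ∀ z : E, ∑ i, ‖gradient (f i) z - gradient (f i) xstar‖^2 ≤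
      2*L*(n:ℝ)*(favg z - favg xstar) := by
    intro z
    calc ∑ i, ‖gradient (f i) z - gradient (f i) xstar‖^2
        ≤ ∑ i, 2*L*(f i z - f i xstar - ⟪gradient (f i) xstar, z - xstar⟫) :=
          Finset.sum_le_sum (fun i _ => coco i z)
      _ = 2*L*(n:ℝ)*(favg z - favg xstar) := by
          rw [← Finset.mul_sum, Finset.sum_sub_distrib, Finset.sum_sub_distrib,
            hfsum z, hfsum xstar, hinner0]
          ring
  have hstr : 2*μ*(favg x - favg xstar) ≤ ‖g‖^2 := by
    have h := hstrong x xstar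
    rw [← hgdef] at h
    have hcs' : -(‖g‖ * ‖xstar - x‖) ≤ ⟪g, xstar - x⟫ := by
      have h1 := abs_real_inner_le_norm g (xstar - x)
      have h2 := neg_abs_le ⟪g, xstar - x⟫
      linarith
    nlinarith [h, hcs', sq_nonneg (‖g‖ - μ * ‖xstar - x‖), norm_nonneg (xstar - x)]
  have hpt : ∀ i, ‖g + gradient (f i) y - gradient (f i) x‖^2 ≤
      2*‖gradient (f i) y - gradient (f i) xstar‖^2
      + 2*‖gradient (f i) x - gradient (f i) xstar‖^2
      - 4*⟪g, gradient (f i) x - gradient (f i) xstar⟫ + 2*‖g‖^2 := by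
    intro i
    set b := gradient (f i) y - gradient (f i) xstar with hb
    set a := gradient (f i) x - gradient (f i) xstar with ha
    have hid : g + gradient (f i) y - gradient (f i) x = b + (g - a) := by
      rw [hb, ha]; abel
    rw [hid]
    have h1 : ‖b + (g - a)‖^2 = ‖b‖^2 + 2*⟪b, g - a⟫ + ‖g - a‖^2 := norm_add_sq_real b (g - a)
    have h2 : ‖g - a‖^2 = ‖g‖^2 - 2*⟪g, a⟫ + ‖a‖^2 := norm_sub_sq_real g a
    nlinarith [h1, h2, real_inner_le_norm b (g - a), sq_nonneg (‖b‖ - ‖g - a‖),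
      norm_nonneg b, norm_nonneg (g - a)]
  have hinnersum : ∑ i, ⟪g, gradient (f i) x - gradient (f i) xstar⟫ = (n:ℝ) * ‖g‖^2 := by
    rw [← inner_sum, Finset.sum_sub_distrib, hsumx, hsum0, sub_zero, real_inner_smul_right,
      real_inner_self_eq_norm_sq]
  have hT : ∑ i, ‖g + gradient (f i) y - gradient (f i) x‖^2 ≤
      2*(∑ i, ‖gradient (f i) y - gradient (f i) xstar‖^2)
      + 2*(∑ i, ‖gradient (f i) x - gradient (f i) xstar‖^2)
      - 4*((n:ℝ)*‖g‖^2) + 2*(n:ℝ)*‖g‖^2 := by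
    calc ∑ i, ‖g + gradient (f i) y - gradient (f i) x‖^2
        ≤ ∑ i, (2*‖gradient (f i) y - gradient (f i) xstar‖^2
          + 2*‖gradient (f i) x - gradient (f i) xstar‖^2
          - 4*⟪g, gradient (f i) x - gradient (f i) xstar⟫ + 2*‖g‖^2) :=
          Finset.sum_le_sum (fun i _ => hpt i)
      _ = 2*(∑ i, ‖gradient (f i) y - gradient (f i) xstar‖^2)
          + 2*(∑ i, ‖gradient (f i) x - gradient (f i) xstar‖^2)
          - 4*((n:ℝ)*‖g‖^2) + 2*(n:ℝ)*‖g‖^2 := by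
          rw [Finset.sum_add_distrib, Finset.sum_sub_distrib, Finset.sum_add_distrib,
            ← Finset.mul_sum, ← Finset.mul_sum, ← Finset.mul_sum, hinnersum,
            Finset.sum_const, Finset.card_univ, Fintype.card_fin, nsmul_eq_mul]
          ring
  rw [show (1/(n:ℝ)) * ∑ i, ‖g + gradient (f i) y - gradient (f i) x‖^2
      = (∑ i, ‖g + gradient (f i) y - gradient (f i) x‖^2) / n from by ring,
    div_le_iff₀ hn']
  have hBx := hB x
  have hBy := hB y
  have hstrn : (n:ℝ) * (2*μ*(favg x - favg xstar)) ≤ (n:ℝ) * ‖g‖^2 :=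
    mul_le_mul_of_nonneg_left hstr hn'.le
  nlinarith [hT, hBx, hBy, hstrn]
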